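/- L^∘ is sound with respect to the formal language semantics: let Σ be an alphabet and let w assign to each primitive type a language over Σ (a set of finite words in Σ*); extend w to all types by w(B\A) = {u ∈ Σ* : for all v ∈ w(B), vu ∈ w(A)}, w(A/B) = {u ∈ Σ* : for all v ∈ w(B), uv ∈ w(A)}, w(A·B) = {uv : u ∈ w(A), v ∈ w(B)}, and w(A^∘) = {vu : uv ∈ w(A)}. Then for every sequent A1,…,An → B derivable in L^∘, the inclusion w(A1)·…·w(An) ⊆ w(B) holds (where · on languages is elementwise concatenation). -/

import Mathlib

/-- Types of the Lambek calculus with the cyclic shift `L^∘`, built from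
primitive types `P` by `\` (`ldiv A B = A \ B`), `/` (`rdiv B A = B / A`),
`·` (`mul`) and the cyclic shift `^∘` (`circ`). -/
inductive Fm (P : Type) : Type
  | prim : P → Fm P
  | ldiv : Fm P → Fm P → Fm P
  | rdiv : Fm P → Fm P → Fm P
  | mul  : Fm P → Fm P → Fm P
  | circ : Fm P → Fm P
deriving DecidableEq

open Fm

/-- Derivability of sequents in the Lambek calculus with the cyclic shift `L^∘`.
The Boolean flag indicates whether the rule (cut) may be used:
`Dv P true` is `L^∘` (with cut), `Dv P false` is its cut-free part. -/
inductive Dv (P : Type) : Bool → List (Fm P) → Fm P → Prop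
  | ax (c : Bool) (A : Fm P) :
      Dv P c [A] A
  | ldivL (c : Bool) (Γ Δ Pi : List (Fm P)) (A B C : Fm P) :
      Dv P c (Γ ++ B :: Δ) C → Dv P c Pi A → Pi ≠ [] →
      Dv P c (Γ ++ Pi ++ ldiv A B :: Δ) C
  | ldivR (c : Bool) (Pi : List (Fm P)) (A B : Fm P) :
      Dv P c (A :: Pi) B → Pi ≠ [] →
      Dv P c Pi (ldiv A B)
  | rdivL (c : Bool) (Γ Δ Pi : List (Fm P)) (A B C : Fm P) :
      Dv P c (Γ ++ B :: Δ) C → Dv P c Pi A → Pi ≠ [] →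
      Dv P c (Γ ++ rdiv B A :: (Pi ++ Δ)) C
  | rdivR (c : Bool) (Pi : List (Fm P)) (A B : Fm P) :
      Dv P c (Pi ++ [A]) B → Pi ≠ [] →
      Dv P c Pi (rdiv B A)
  | mulL (c : Bool) (Γ Δ : List (Fm P)) (A B C : Fm P) :
      Dv P c (Γ ++ A :: B :: Δ) C →
      Dv P c (Γ ++ mul A B :: Δ) C
  | mulR (c : Bool) (Pi Psi : List (Fm P)) (A B : Fm P) :
      Dv P c Pi A → Dv P c Psi B → Pi ≠ [] → Psi ≠ [] →
      Dv P c (Pi ++ Psi) (mul A B)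
  | circR (c : Bool) (Pi : List (Fm P)) (A : Fm P) :
      Dv P c Pi A →
      Dv P c Pi (circ A)
  | circL (c : Bool) (A B : Fm P) :
      Dv P c [B] (circ A) →
      Dv P c [circ B] (circ A)
  | circC (c : Bool) (Pi Psi : List (Fm P)) (A : Fm P) :
      Dv P c (Pi ++ Psi) (circ A) → Pi ≠ [] → Psi ≠ [] →
      Dv P c (Psi ++ Pi) (circ A)
  | cut (Γ Δ Pi : List (Fm P)) (A B : Fm P) :
      Dv P true Pi A → Dv P true (Γ ++ A :: Δ) B → Pi ≠ [] →
      Dv P true (Γ ++ Pi ++ Δ) B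

/-- The formal language interpretation of types, extending an assignment `w`
of languages to primitive types.  Recall `ldiv A B = A \ B` and
`rdiv B A = B / A`. -/
def interp {P α : Type} (w : P → Language α) : Fm P → Language α
  | Fm.prim p => w p
  | Fm.ldiv A B => { u | ∀ v ∈ interp w A, v ++ u ∈ interp w B }
  | Fm.rdiv B A => { u | ∀ v ∈ interp w A, u ++ v ∈ interp w B }
  | Fm.mul A B => interp w A * interp w B
  | Fm.circ A => { x | ∃ u v, u ++ v ∈ interp w A ∧ x = v ++ u }

lemma rot_append {α : Type} (u v : List α) : (u ++ v).rotate u.length = v ++ u := by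
  rw [List.rotate_eq_drop_append_take (by simp), List.drop_left, List.take_left]

lemma circ_rotate {P α : Type} (w : P → Language α) (A : Fm P) (y : List α)
    (hy : y ∈ interp w A) (n : ℕ) : y.rotate n ∈ interp w (circ A) := by
  rcases Nat.eq_zero_or_pos y.length with h0 | hpos
  · have : y = [] := List.length_eq_zero_iff.mp h0
    subst this
    exact ⟨[], [], hy, by simp⟩
  · rw [← List.rotate_mod]
    have hn : n % y.length ≤ y.length := (Nat.mod_lt _ hpos).le
    refine ⟨y.take (n % y.length), y.drop (n % y.length), by simpa using hy, ?_⟩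
    rw [List.rotate_eq_drop_append_take hn]

lemma circ_swap {P α : Type} (w : P → Language α) (A : Fm P) (u v : List α)
    (h : u ++ v ∈ interp w (circ A)) : v ++ u ∈ interp w (circ A) := by
  obtain ⟨p, q, hpq, heq⟩ := h
  have hx : v ++ u = (p ++ q).rotate (p.length + u.length) := by
    rw [← List.rotate_rotate, rot_append, ← heq, rot_append]
  rw [hx]
  exact circ_rotate w A _ hpq _

theorem Lcirc_sound_aux (P α : Type) (w : P → Language α) (c : Bool) (Γ : List (Fm P)) (B : Fm P)
    (h : Dv P c Γ B) : (Γ.map (interp w)).prod ≤ interp w B := by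
  induction h with
  | ax c A => simp
  | ldivL c Γ Δ Pi A B C h1 h2 hne ih1 ih2 =>
      intro x hx
      simp only [List.map_append, List.prod_append, List.map_cons, List.prod_cons,
        Language.mem_mul] at hx
      obtain ⟨gp, ⟨g, hg, p, hp, rfl⟩, rest, ⟨u, hu, d, hd, rfl⟩, rfl⟩ := hx
      have hpA : p ∈ interp w A := ih2 hp
      have hB : p ++ u ∈ interp w B := hu p hpA
      have : g ++ ((p ++ u) ++ d) ∈ ((Γ ++ B :: Δ).map (interp w)).prod := by
        simp only [List.map_append, List.prod_append, List.map_cons, List.prod_cons,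
          Language.mem_mul]
        exact ⟨g, hg, (p ++ u) ++ d, ⟨p ++ u, hB, d, hd, rfl⟩, rfl⟩
      have := ih1 this
      simpa [List.append_assoc] using this
  | ldivR c Pi A B h1 hne ih =>
      intro x hx v hv
      apply ih
      simp only [List.map_cons, List.prod_cons, Language.mem_mul]
      exact ⟨v, hv, x, hx, rfl⟩
  | rdivL c Γ Δ Pi A B C h1 h2 hne ih1 ih2 =>
      intro x hx
      simp only [List.map_append, List.prod_append, List.map_cons, List.prod_cons,
        Language.mem_mul] at hx
      obtain ⟨g, hg, rest, ⟨u, hu, pd, ⟨p, hp, d, hd, rfl⟩, rfl⟩, rfl⟩ := hx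
      have hpA : p ∈ interp w A := ih2 hp
      have hB : u ++ p ∈ interp w B := hu p hpA
      have : g ++ ((u ++ p) ++ d) ∈ ((Γ ++ B :: Δ).map (interp w)).prod := by
        simp only [List.map_append, List.prod_append, List.map_cons, List.prod_cons,
          Language.mem_mul]
        exact ⟨g, hg, (u ++ p) ++ d, ⟨u ++ p, hB, d, hd, rfl⟩, rfl⟩
      have := ih1 this
      simpa [List.append_assoc] using this
  | rdivR c Pi A B h1 hne ih =>
      intro x hx v hv
      apply ih
      simp only [List.map_append, List.prod_append, List.map_cons, List.prod_cons,
        List.map_nil, List.prod_nil, mul_one, Language.mem_mul]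
      exact ⟨x, hx, v, by exact hv, rfl⟩
  | mulL c Γ Δ A B C h1 ih =>
      intro x hx
      simp only [List.map_append, List.prod_append, List.map_cons, List.prod_cons,
        Language.mem_mul] at hx
      obtain ⟨g, hg, rest, ⟨m, hm, d, hd, rfl⟩, rfl⟩ := hx
      obtain ⟨a, ha, b, hb, rfl⟩ := hm
      apply ih
      simp only [List.map_append, List.prod_append, List.map_cons, List.prod_cons,
        Language.mem_mul]
      exact ⟨g, hg, (a ++ b) ++ d, ⟨a, ha, b ++ d, ⟨b, hb, d, hd, rfl⟩, by simp⟩, rfl⟩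
  | mulR c Pi Psi A B h1 h2 hne1 hne2 ih1 ih2 =>
      intro x hx
      simp only [List.map_append, List.prod_append, Language.mem_mul] at hx
      obtain ⟨p, hp, s, hs, rfl⟩ := hx
      exact ⟨p, ih1 hp, s, ih2 hs, rfl⟩
  | circR c Pi A h1 ih =>
      intro x hx
      exact ⟨[], x, by rw [List.nil_append]; exact ih hx, by simp⟩
  | circL c A B h1 ih =>
      intro x hx
      simp only [List.map_cons, List.map_nil, List.prod_cons, List.prod_nil, mul_one] at hx
      obtain ⟨u, v, huv, rfl⟩ := hx
      have : u ++ v ∈ interp w (circ A) := ih (by simp only [List.map_cons, List.map_nil, List.prod_cons, List.prod_nil, mul_one]; exact huv)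
      exact circ_swap w A u v this
  | circC c Pi Psi A h1 hne1 hne2 ih =>
      intro x hx
      simp only [List.map_append, List.prod_append, Language.mem_mul] at hx
      obtain ⟨s, hs, p, hp, rfl⟩ := hx
      have : p ++ s ∈ interp w (circ A) := by
        apply ih
        simp only [List.map_append, List.prod_append, Language.mem_mul]
        exact ⟨p, hp, s, hs, rfl⟩
      exact circ_swap w A p s this
  | cut Γ Δ Pi A B h1 h2 hne ih1 ih2 =>
      intro x hx
      simp only [List.map_append, List.prod_append, Language.mem_mul] at hx
      obtain ⟨gp, ⟨g, hg, p, hp, rfl⟩, d, hd, rfl⟩ := hx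
      have hpA : p ∈ interp w A := ih1 hp
      apply ih2
      simp only [List.map_append, List.prod_append, List.map_cons, List.prod_cons,
        Language.mem_mul]
      exact ⟨g, hg, p ++ d, ⟨p, hpA, d, hd, rfl⟩, by simp⟩


/-- Soundness of `L^∘` with respect to the formal language semantics: if
`A1,…,An → B` is derivable in `L^∘`, then `w(A1)·…·w(An) ⊆ w(B)` for every
interpretation `w` of the primitive types as languages. -/
theorem Lcirc_sound (P α : Type) (w : P → Language α) (Γ : List (Fm P)) (B : Fm P)
    (h : Dv P true Γ B) : (Γ.map (interp w)).prod ≤ interp w B :=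
  Lcirc_sound_aux P α w true Γ B h
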